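/- Let A be a negative definite n×n real matrix (i.e., −A is symmetric positive definite, or more generally A + Aᵀ is negative definite) and B an n×m real matrix of full column rank. Then the block matrix [[A, B],[−Bᵀ, 0]] is Hurwitz: all its eigenvalues have strictly negative real part. -/

import Mathlib

open Matrix

private lemma re_quad {k : ℕ} (S : Matrix (Fin k) (Fin k) ℝ) (z : Fin k → ℂ) :
    (star z ⬝ᵥ (S.map Complex.ofReal *ᵥ z)).re
      = (fun i => (z i).re) ⬝ᵥ (S *ᵥ fun i => (z i).re)
        + (fun i => (z i).im) ⬝ᵥ (S *ᵥ fun i => (z i).im) := by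
  simp only [dotProduct, mulVec, map_apply, Pi.star_apply, Complex.re_sum, Finset.mul_sum,
    ← Finset.sum_add_distrib]
  refine Finset.sum_congr rfl fun i _ => Finset.sum_congr rfl fun j _ => ?_
  simp [Complex.mul_re, Complex.mul_im, RCLike.star_def]

private lemma posdef_map_re {k : ℕ} {S : Matrix (Fin k) (Fin k) ℝ} (hS : S.PosDef)
    {z : Fin k → ℂ} (hz : z ≠ 0) : 0 < (star z ⬝ᵥ (S.map Complex.ofReal *ᵥ z)).re := by
  rw [re_quad]
  have hre := hS.posSemidef.dotProduct_mulVec_nonneg (fun i => (z i).re)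
  have him := hS.posSemidef.dotProduct_mulVec_nonneg (fun i => (z i).im)
  simp only [RCLike.re_to_real, star_trivial] at hre him
  rcases eq_or_ne (fun i => (z i).re) 0 with h1 | h1
  · have h2 : (fun i => (z i).im) ≠ 0 := by
      intro h2
      apply hz
      funext i
      have e1 := congrFun h1 i
      have e2 := congrFun h2 i
      simp only [Pi.zero_apply] at e1 e2 ⊢
      exact Complex.ext e1 e2
    have := hS.dotProduct_mulVec_pos h2
    simp only [star_trivial] at this
    linarith
  · have := hS.dotProduct_mulVec_pos h1
    simp only [star_trivial] at this
    linarith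

private lemma B_inj {n m : ℕ} {B : Matrix (Fin n) (Fin m) ℝ} (hB : B.rank = m)
    {y : Fin m → ℂ} (hy : B.map Complex.ofReal *ᵥ y = 0) : y = 0 := by
  -- real injectivity
  have hker : LinearMap.ker B.mulVecLin = ⊥ := by
    have h := B.mulVecLin.finrank_range_add_finrank_ker
    rw [show Module.finrank ℝ (LinearMap.range B.mulVecLin) = B.rank from rfl, hB,
      Module.finrank_fintype_fun_eq_card, Fintype.card_fin] at h
    have : Module.finrank ℝ (LinearMap.ker B.mulVecLin) = 0 := by omega
    exact Submodule.finrank_eq_zero.mp this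
  have hinj : ∀ w : Fin m → ℝ, B *ᵥ w = 0 → w = 0 := by
    intro w hw
    have : w ∈ LinearMap.ker B.mulVecLin := hw
    rwa [hker, Submodule.mem_bot] at this
  have hre : B *ᵥ (fun j => (y j).re) = 0 := by
    funext i
    have := congrFun hy i
    simp only [mulVec, dotProduct, map_apply, Pi.zero_apply] at this ⊢
    have := congrArg Complex.re this
    simpa [Complex.re_sum, Complex.re_ofReal_mul] using this
  have him : B *ᵥ (fun j => (y j).im) = 0 := by
    funext i
    have := congrFun hy i
    simp only [mulVec, dotProduct, map_apply, Pi.zero_apply] at this ⊢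
    have := congrArg Complex.im this
    simpa [Complex.im_sum, Complex.im_ofReal_mul] using this
  funext j
  have e1 := congrFun (hinj _ hre) j
  have e2 := congrFun (hinj _ him) j
  simp only [Pi.zero_apply] at e1 e2 ⊢
  exact Complex.ext e1 e2

theorem stmt8 {n m : ℕ} (A : Matrix (Fin n) (Fin n) ℝ) (hA : (-(A + Aᵀ)).PosDef)
    (B : Matrix (Fin n) (Fin m) ℝ) (hB : B.rank = m) :
    ∀ μ ∈ spectrum ℂ ((Matrix.fromBlocks A B (-Bᵀ) 0).map Complex.ofReal), μ.re < 0 := by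
  intro μ hμ
  set M : Matrix (Fin n ⊕ Fin m) (Fin n ⊕ Fin m) ℂ :=
    (Matrix.fromBlocks A B (-Bᵀ) 0).map Complex.ofReal with hM
  -- extract an eigenvector
  rw [spectrum.mem_iff] at hμ
  have hdet : (M - μ • 1).det = 0 := by
    by_contra hd
    exact hμ (by
      have : IsUnit (μ • (1 : Matrix (Fin n ⊕ Fin m) (Fin n ⊕ Fin m) ℂ) - M) := by
        rw [Matrix.isUnit_iff_isUnit_det]
        rw [show μ • (1 : Matrix (Fin n ⊕ Fin m) (Fin n ⊕ Fin m) ℂ) - M = -(M - μ • 1) from (neg_sub _ _).symm]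
        simp only [det_neg]
        exact (IsUnit.mul_iff.mpr ⟨(isUnit_one.neg).pow _, isUnit_iff_ne_zero.mpr hd⟩)
      simpa [Algebra.algebraMap_eq_smul_one] using this)
  obtain ⟨v, hv0, hv⟩ := (Matrix.exists_mulVec_eq_zero_iff).mpr hdet
  have heig : M *ᵥ v = μ • v := by
    have := hv
    rw [sub_mulVec, sub_eq_zero] at this
    simpa [smul_mulVec, one_mulVec] using this
  -- split v
  set x : Fin n → ℂ := v ∘ Sum.inl with hx
  set y : Fin m → ℂ := v ∘ Sum.inr with hy
  have hvelim : v = Sum.elim x y := (Sum.elim_comp_inl_inr v).symm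
  -- the squared norm of v
  set sre : ℝ := ∑ i, Complex.normSq (v i) with hsre
  have hs : star v ⬝ᵥ v = (sre : ℂ) := by
    simp [dotProduct, hsre, Complex.normSq_eq_conj_mul_self, RCLike.star_def]
  have hspos : 0 < sre := by
    obtain ⟨i, hi⟩ := Function.ne_iff.mp hv0
    exact Finset.sum_pos' (fun j _ => Complex.normSq_nonneg _)
      ⟨i, Finset.mem_univ i, Complex.normSq_pos.mpr hi⟩
  -- the quadratic form value
  set c : ℂ := star v ⬝ᵥ (M *ᵥ v) with hc
  have hcval : c = μ * (sre : ℂ) := by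
    rw [hc, heig, dotProduct_smul, hs, smul_eq_mul]
  -- M + Mᴴ
  have hMH : M + Mᴴ = ((fromBlocks (A + Aᵀ) 0 0 0).map Complex.ofReal
      : Matrix (Fin n ⊕ Fin m) (Fin n ⊕ Fin m) ℂ) := by
    ext i j
    rcases i with i | i <;> rcases j with j | j <;>
      simp [hM, fromBlocks, conjTranspose_apply, Complex.conj_ofReal, add_comm]
  have hstarc : (starRingEnd ℂ) c = star v ⬝ᵥ (Mᴴ *ᵥ v) := by
    rw [dotProduct_mulVec, ← star_mulVec, hc]
    rw [show (starRingEnd ℂ) (star v ⬝ᵥ (M *ᵥ v)) = star (star v ⬝ᵥ (M *ᵥ v)) from rfl,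
      star_dotProduct, star_star]
  have hsum : c + (starRingEnd ℂ) c = star x ⬝ᵥ ((A + Aᵀ).map Complex.ofReal *ᵥ x) := by
    rw [hstarc, hc, ← dotProduct_add, ← add_mulVec, hMH]
    rw [hvelim]
    rw [show ((fromBlocks (A + Aᵀ) 0 0 0).map Complex.ofReal
        : Matrix (Fin n ⊕ Fin m) (Fin n ⊕ Fin m) ℂ)
      = fromBlocks ((A + Aᵀ).map Complex.ofReal) 0 0 0 by
        simp [Matrix.fromBlocks_map]]
    rw [fromBlocks_mulVec]
    simp [dotProduct, Fintype.sum_sum_type]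
  -- real part identity
  have hre2 : 2 * (μ.re * sre) = (star x ⬝ᵥ ((A + Aᵀ).map Complex.ofReal *ᵥ x)).re := by
    have := congrArg Complex.re hsum
    rw [Complex.add_conj] at this
    simp only [hcval] at this
    simpa [Complex.ofReal_mul, Complex.mul_re, Complex.ofReal_re, Complex.ofReal_im] using this
  by_cases hx0 : x = 0
  · -- eigenvector equation forces y = 0, contradiction
    exfalso
    have hMx : M *ᵥ v = Sum.elim (A.map Complex.ofReal *ᵥ x + B.map Complex.ofReal *ᵥ y)
        ((-Bᵀ).map Complex.ofReal *ᵥ x + (0 : Matrix (Fin m) (Fin m) ℂ) *ᵥ y) := by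
      rw [hvelim, hM, show ((fromBlocks A B (-Bᵀ) 0).map Complex.ofReal
          : Matrix (Fin n ⊕ Fin m) (Fin n ⊕ Fin m) ℂ)
        = fromBlocks (A.map Complex.ofReal) (B.map Complex.ofReal)
            ((-Bᵀ).map Complex.ofReal) ((0 : Matrix (Fin m) (Fin m) ℝ).map Complex.ofReal) by
          simp [Matrix.fromBlocks_map], fromBlocks_mulVec]
      simp
    have hBy : B.map Complex.ofReal *ᵥ y = 0 := by
      funext i
      have := congrFun heig (Sum.inl i)
      rw [hMx] at this
      simp only [Sum.elim_inl, Pi.add_apply, Pi.smul_apply, hvelim, Sum.elim_inl] at this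
      have hxx : x i = 0 := congrFun hx0 i
      have hAx : A.map Complex.ofReal *ᵥ x = 0 := by rw [hx0, mulVec_zero]
      rw [hx0] at this
      simpa [mulVec_zero] using this
    have hy0 : y = 0 := B_inj hB hBy
    apply hv0
    rw [hvelim, hx0, hy0]
    simp
  · -- strict negativity from positive definiteness
    have hneg : (star x ⬝ᵥ ((A + Aᵀ).map Complex.ofReal *ᵥ x)).re < 0 := by
      have hp := posdef_map_re hA hx0
      have hmap : ((-(A + Aᵀ)).map Complex.ofReal : Matrix (Fin n) (Fin n) ℂ)
          = -((A + Aᵀ).map Complex.ofReal) := by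
        ext i j; simp
      rw [hmap, neg_mulVec, dotProduct_neg, Complex.neg_re] at hp
      linarith
    rw [← hre2] at hneg
    nlinarith
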